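/- Let ℓ be a prime, r ≥ 1 an integer, v₀ ∈ (ℤ/ℓ^rℤ)² and M₀ ∈ M₂(ℤ/ℓ^rℤ). Suppose det(M₀ − I) ≠ 0 in ℤ/ℓ^rℤ and v₀ ∈ Row(M₀ − I). Then for every k ≥ r, every pair (v,M) ∈ (ℤ/ℓ^kℤ)² × M₂(ℤ/ℓ^kℤ) whose reduction mod ℓ^r equals (v₀,M₀) satisfies v ∈ Row(M − I). In particular N_k(v₀,M₀) = ℓ^{6(k−r)} for all k ≥ r. -/

import Mathlib

open Matrix

section Aux

variable {ℓ r k : ℕ}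

lemma castHom_surj (hℓ : ℓ.Prime) (hrk : r ≤ k) :
    Function.Surjective (ZMod.castHom (pow_dvd_pow ℓ hrk) (ZMod (ℓ ^ r))) := by
  haveI : NeZero (ℓ ^ r) := ⟨pow_ne_zero _ hℓ.ne_zero⟩
  intro x
  refine ⟨(x.val : ZMod (ℓ ^ k)), ?_⟩
  rw [map_natCast]
  exact ZMod.natCast_rightInverse x

lemma card_fiber (hℓ : ℓ.Prime) (hrk : r ≤ k) (c : ZMod (ℓ ^ r)) :
    Nat.card {x : ZMod (ℓ ^ k) // ZMod.castHom (pow_dvd_pow ℓ hrk) (ZMod (ℓ ^ r)) x = c}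
      = ℓ ^ (k - r) := by
  haveI : NeZero (ℓ ^ r) := ⟨pow_ne_zero _ hℓ.ne_zero⟩
  haveI : NeZero (ℓ ^ k) := ⟨pow_ne_zero _ hℓ.ne_zero⟩
  set f := ZMod.castHom (pow_dvd_pow ℓ hrk) (ZMod (ℓ ^ r)) with hf
  have hsurj : Function.Surjective f := castHom_surj hℓ hrk
  set g : ZMod (ℓ ^ k) →+ ZMod (ℓ ^ r) := f.toAddMonoidHom with hg
  have hgsurj : Function.Surjective g := hsurj
  obtain ⟨x₀, hx₀⟩ := hsurj c
  -- fiber ≃ kernel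
  have e : {x : ZMod (ℓ ^ k) // f x = c} ≃ g.ker :=
    { toFun := fun x => ⟨x.1 - x₀, by
        simp [AddMonoidHom.mem_ker, hg, map_sub, x.2, hx₀]⟩
      invFun := fun y => ⟨y.1 + x₀, by
        have := y.2
        simp only [AddMonoidHom.mem_ker, hg, RingHom.toAddMonoidHom_eq_coe,
          AddMonoidHom.coe_coe] at this
        simp [map_add, this, hx₀]⟩
      left_inv := fun x => by ext; simp
      right_inv := fun y => by ext; simp }
  rw [Nat.card_congr e]
  have h1 := AddSubgroup.card_eq_card_quotient_mul_card_addSubgroup g.ker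
  have h2 : Nat.card (ZMod (ℓ ^ k) ⧸ g.ker) = ℓ ^ r := by
    rw [Nat.card_congr (QuotientAddGroup.quotientKerEquivOfSurjective g hgsurj).toEquiv]
    exact Nat.card_zmod _
  rw [Nat.card_zmod, h2] at h1
  have h3 : ℓ ^ k = ℓ ^ r * ℓ ^ (k - r) := by
    rw [← pow_add, Nat.add_sub_cancel' hrk]
  have hpos : 0 < ℓ ^ r := pow_pos hℓ.pos r
  exact (Nat.eq_of_mul_eq_mul_left hpos (h3.symm.trans h1)).symm

/-- key lifting lemma -/
lemma lift_row (hℓ : ℓ.Prime) (hr : 1 ≤ r) (hrk : r ≤ k)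
    (v₀ : Fin 2 → ZMod (ℓ ^ r)) (M₀ : Matrix (Fin 2) (Fin 2) (ZMod (ℓ ^ r)))
    (hdet : (M₀ - 1).det ≠ 0)
    (hrow : ∃ x : Fin 2 → ZMod (ℓ ^ r), x ᵥ* (M₀ - 1) = v₀)
    (v : Fin 2 → ZMod (ℓ ^ k)) (M : Matrix (Fin 2) (Fin 2) (ZMod (ℓ ^ k)))
    (hv : ∀ i, ZMod.castHom (pow_dvd_pow ℓ hrk) (ZMod (ℓ ^ r)) (v i) = v₀ i)
    (hM : M.map (ZMod.castHom (pow_dvd_pow ℓ hrk) (ZMod (ℓ ^ r))) = M₀) :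
    ∃ x : Fin 2 → ZMod (ℓ ^ k), x ᵥ* (M - 1) = v := by
  haveI : NeZero (ℓ ^ r) := ⟨pow_ne_zero _ hℓ.ne_zero⟩
  haveI : NeZero (ℓ ^ k) := ⟨pow_ne_zero _ hℓ.ne_zero⟩
  set f := ZMod.castHom (pow_dvd_pow ℓ hrk) (ZMod (ℓ ^ r)) with hfdef
  set A : Matrix (Fin 2) (Fin 2) (ZMod (ℓ ^ k)) := M - 1 with hA
  have hmapA : A.map f = M₀ - 1 := by
    ext i j
    simp [hA, Matrix.map_apply, Matrix.sub_apply, Matrix.one_apply, map_sub,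
      apply_ite f, ← hM]
  -- f(det A) ≠ 0
  have hdetA : f A.det ≠ 0 := by
    have : f A.det = (M₀ - 1).det := by
      rw [RingHom.map_det, ← hmapA]; rfl
    rw [this]; exact hdet
  -- decompose det A = ℓ^d * e with e a unit, d < r
  set n : ℕ := A.det.val with hn
  have hnA : (n : ZMod (ℓ ^ k)) = A.det := ZMod.natCast_rightInverse A.det
  have hfn : f A.det = (n : ZMod (ℓ ^ r)) := by
    rw [← hnA, map_natCast]
  have hndvd : ¬ (ℓ ^ r ∣ n) := by
    intro h
    apply hdetA
    rw [hfn, ZMod.natCast_eq_zero_iff]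
    exact h
  have hn0 : n ≠ 0 := by
    intro h0
    apply hndvd
    rw [h0]
    exact dvd_zero _
  set d : ℕ := n.factorization ℓ with hd
  have hdr : d < r := by
    by_contra h
    push_neg at h
    exact hndvd (dvd_trans (pow_dvd_pow ℓ h) (Nat.ordProj_dvd n ℓ))
  set m : ℕ := n / ℓ ^ d with hm
  have hnm : ℓ ^ d * m = n := Nat.ordProj_mul_ordCompl_eq_self n ℓ
  have hℓm : ¬ ℓ ∣ m := Nat.not_dvd_ordCompl hℓ hn0
  have hunit : IsUnit (m : ZMod (ℓ ^ k)) := by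
    rw [ZMod.isUnit_iff_coprime]
    exact Nat.Coprime.pow_right _ ((Nat.coprime_comm).mp ((hℓ.coprime_iff_not_dvd).mpr hℓm))
  obtain ⟨u, hu⟩ := hunit
  have hdet_fact : A.det = (ℓ : ZMod (ℓ ^ k)) ^ d * u := by
    rw [hu, ← hnA, ← hnm]
    push_cast
    ring
  -- lift the solution mod ℓ^r
  obtain ⟨x₀, hx₀⟩ := hrow
  have hsurj := castHom_surj hℓ hrk
  choose x₁ hx₁ using fun i => hsurj (x₀ i)
  -- the error term c := v - x₁ ᵥ* A reduces to 0
  set c : Fin 2 → ZMod (ℓ ^ k) := v - x₁ ᵥ* A with hc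
  have hAf : ∀ a b, f (A a b) = (M₀ - 1) a b := fun a b => by rw [← hmapA]; rfl
  have hfc : ∀ i, f (c i) = 0 := by
    intro i
    have hred : f ((x₁ ᵥ* A) i) = (x₀ ᵥ* (M₀ - 1)) i := by
      simp only [Matrix.vecMul, dotProduct, Fin.sum_univ_two, map_add,
        _root_.map_mul, hx₁, hAf]
      rw [hfdef, hx₁, hx₁]
    simp [hc, Pi.sub_apply, map_sub, hred, hx₀, hv i]
  -- hence each c i is divisible by ℓ^r
  have hdiv : ∀ i, ∃ w : ZMod (ℓ ^ k), c i = (ℓ : ZMod (ℓ ^ k)) ^ r * w := by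
    intro i
    have h1 : ((c i).val : ZMod (ℓ ^ r)) = 0 := by
      rw [ZMod.natCast_val]
      exact hfc i
    rw [ZMod.natCast_eq_zero_iff] at h1
    obtain ⟨t, ht⟩ := h1
    refine ⟨(t : ZMod (ℓ ^ k)), ?_⟩
    have : ((c i).val : ZMod (ℓ ^ k)) = c i := ZMod.natCast_rightInverse (c i)
    rw [← this, ht]
    push_cast
    ring
  choose w hw using hdiv
  -- solve y ᵥ* A = c
  set y : Fin 2 → ZMod (ℓ ^ k) :=
    ((ℓ : ZMod (ℓ ^ k)) ^ (r - d) * (↑u⁻¹ : ZMod (ℓ ^ k))) • (w ᵥ* A.adjugate) with hy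
  have hyA : y ᵥ* A = c := by
    have h1 : y ᵥ* A = ((ℓ : ZMod (ℓ ^ k)) ^ (r - d) * (↑u⁻¹ : ZMod (ℓ ^ k))) •
        (w ᵥ* (A.adjugate * A)) := by
      rw [hy, Matrix.smul_vecMul, Matrix.vecMul_vecMul]
    rw [h1, Matrix.adjugate_mul]
    funext i
    have hℓpow : (ℓ : ZMod (ℓ ^ k)) ^ (r - d) * (ℓ : ZMod (ℓ ^ k)) ^ d
        = (ℓ : ZMod (ℓ ^ k)) ^ r := by
      rw [← pow_add, Nat.sub_add_cancel hdr.le]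
    have huu : (↑u⁻¹ : ZMod (ℓ ^ k)) * ↑u = 1 := u.inv_mul
    rw [Pi.smul_apply, smul_eq_mul]
    have hsm : (w ᵥ* (A.det • (1 : Matrix (Fin 2) (Fin 2) (ZMod (ℓ ^ k))))) i
        = A.det * w i := by
      simp only [Matrix.vecMul, dotProduct, Fin.sum_univ_two, Matrix.smul_apply,
        Matrix.one_apply, smul_eq_mul]
      fin_cases i <;> simp <;> ring
    rw [hsm, hdet_fact, hw i]
    have hexp : (ℓ : ZMod (ℓ ^ k)) ^ (r - d) * ↑u⁻¹ * ((ℓ : ZMod (ℓ ^ k)) ^ d * ↑u * w i)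
        = ((ℓ : ZMod (ℓ ^ k)) ^ (r - d) * (ℓ : ZMod (ℓ ^ k)) ^ d)
          * (((↑u⁻¹ : ZMod (ℓ ^ k)) * ↑u) * w i) := by ring
    rw [hexp, huu, hℓpow, one_mul]
  refine ⟨x₁ + y, ?_⟩
  rw [Matrix.add_vecMul, hyA, hc]
  simp

end Aux

/-- `N_k(v₀, M₀)`: the number of pairs `(v, M) ∈ (ℤ/ℓ^kℤ)² × M₂(ℤ/ℓ^kℤ)` whose
reduction mod `ℓ^r` is `(v₀, M₀)` and such that `v` lies in the row space of `M - I`. -/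
noncomputable def liftCount (ℓ r k : ℕ) (hrk : r ≤ k) (v₀ : Fin 2 → ZMod (ℓ ^ r))
    (M₀ : Matrix (Fin 2) (Fin 2) (ZMod (ℓ ^ r))) : ℕ :=
  Nat.card {p : (Fin 2 → ZMod (ℓ ^ k)) × Matrix (Fin 2) (Fin 2) (ZMod (ℓ ^ k)) //
    (∀ i, ZMod.castHom (pow_dvd_pow ℓ hrk) (ZMod (ℓ ^ r)) (p.1 i) = v₀ i) ∧
    p.2.map (ZMod.castHom (pow_dvd_pow ℓ hrk) (ZMod (ℓ ^ r))) = M₀ ∧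
    ∃ x : Fin 2 → ZMod (ℓ ^ k), x ᵥ* (p.2 - 1) = p.1}

/-- If `det(M₀ - I) ≠ 0` in `ℤ/ℓ^rℤ` and `v₀ ∈ Row(M₀ - I)`, then every lift `(v, M)`
of `(v₀, M₀)` mod `ℓ^k` (`k ≥ r`) satisfies `v ∈ Row(M - I)`; in particular
`N_k(v₀, M₀) = ℓ^(6(k-r))`. -/
theorem stmt_6 (ℓ : ℕ) (hℓ : ℓ.Prime) (r k : ℕ) (hr : 1 ≤ r) (hrk : r ≤ k)
    (v₀ : Fin 2 → ZMod (ℓ ^ r)) (M₀ : Matrix (Fin 2) (Fin 2) (ZMod (ℓ ^ r)))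
    (hdet : (M₀ - 1).det ≠ 0)
    (hrow : ∃ x : Fin 2 → ZMod (ℓ ^ r), x ᵥ* (M₀ - 1) = v₀) :
    (∀ (v : Fin 2 → ZMod (ℓ ^ k)) (M : Matrix (Fin 2) (Fin 2) (ZMod (ℓ ^ k))),
      (∀ i, ZMod.castHom (pow_dvd_pow ℓ hrk) (ZMod (ℓ ^ r)) (v i) = v₀ i) →
      M.map (ZMod.castHom (pow_dvd_pow ℓ hrk) (ZMod (ℓ ^ r))) = M₀ →
      ∃ x : Fin 2 → ZMod (ℓ ^ k), x ᵥ* (M - 1) = v) ∧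
    liftCount ℓ r k hrk v₀ M₀ = ℓ ^ (6 * (k - r)) := by
  have hmain := lift_row hℓ hr hrk v₀ M₀ hdet hrow
  refine ⟨hmain, ?_⟩
  unfold liftCount
  set f := ZMod.castHom (pow_dvd_pow ℓ hrk) (ZMod (ℓ ^ r)) with hfdef
  -- drop the (automatic) third condition
  have e1 : {p : (Fin 2 → ZMod (ℓ ^ k)) × Matrix (Fin 2) (Fin 2) (ZMod (ℓ ^ k)) //
      (∀ i, f (p.1 i) = v₀ i) ∧ p.2.map f = M₀ ∧
        ∃ x : Fin 2 → ZMod (ℓ ^ k), x ᵥ* (p.2 - 1) = p.1} ≃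
      {p : (Fin 2 → ZMod (ℓ ^ k)) × Matrix (Fin 2) (Fin 2) (ZMod (ℓ ^ k)) //
      (∀ i, f (p.1 i) = v₀ i) ∧ p.2.map f = M₀} :=
    Equiv.subtypeEquivRight (fun p => by
      constructor
      · rintro ⟨h1, h2, _⟩; exact ⟨h1, h2⟩
      · rintro ⟨h1, h2⟩; exact ⟨h1, h2, hmain p.1 p.2 h1 h2⟩)
  rw [Nat.card_congr e1, Nat.card_congr (Equiv.subtypeProdEquivProd
    (p := fun v : Fin 2 → ZMod (ℓ ^ k) => ∀ i, f (v i) = v₀ i)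
    (q := fun M : Matrix (Fin 2) (Fin 2) (ZMod (ℓ ^ k)) => M.map f = M₀)),
    Nat.card_prod]
  have hv : Nat.card {v : Fin 2 → ZMod (ℓ ^ k) // ∀ i, f (v i) = v₀ i}
      = (ℓ ^ (k - r)) ^ 2 := by
    rw [Nat.card_congr (Equiv.subtypePiEquivPi
      (p := fun (i : Fin 2) (x : ZMod (ℓ ^ k)) => f x = v₀ i)), Nat.card_pi]
    simp only [hfdef, card_fiber hℓ hrk]
    simp [sq]
  have hM : Nat.card {M : Matrix (Fin 2) (Fin 2) (ZMod (ℓ ^ k)) // M.map f = M₀}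
      = (ℓ ^ (k - r)) ^ 4 := by
    have e2 : {M : Matrix (Fin 2) (Fin 2) (ZMod (ℓ ^ k)) // M.map f = M₀} ≃
        {M : Fin 2 → Fin 2 → ZMod (ℓ ^ k) // ∀ i, ∀ j, f (M i j) = M₀ i j} :=
      Equiv.subtypeEquivRight (fun M => by
        constructor
        · intro h i j; rw [← h]; rfl
        · intro h; ext i j; exact h i j)
    rw [Nat.card_congr e2,
      Nat.card_congr (Equiv.subtypePiEquivPi
        (p := fun (i : Fin 2) (row : Fin 2 → ZMod (ℓ ^ k)) => ∀ j, f (row j) = M₀ i j)),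
      Nat.card_congr (Equiv.piCongrRight (fun i => Equiv.subtypePiEquivPi
        (p := fun (j : Fin 2) (x : ZMod (ℓ ^ k)) => f x = M₀ i j))),
      Nat.card_pi]
    simp only [hfdef, Nat.card_pi, card_fiber hℓ hrk]
    simp [← pow_mul]
    ring_nf
  rw [hv, hM, ← pow_add, ← pow_mul]
  ring_nf
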